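/- Let E_{ij} = e_{ij} + e_{ji} ∈ M₄(F₂). The 3-dimensional subspaces 𝔅 = ⟨E₁₄, E₂₃, E₁₃+E₂₄⟩ and 𝔆 = ⟨E₁₂, E₂₃, E₁₃+E₂₄⟩ of Λ₄ have identical rank multisets on nonzero elements (three elements of rank 2 and four of rank 4 each), yet there is no A ∈ GL(4,F₂) with A𝔅Aᵀ = 𝔆. -/

import Mathlib

open Matrix

/-- The matrix `E_{ij} = e_{ij} + e_{ji}` in `M₄(F₂)`. -/
def E4 (i j : Fin 4) : Matrix (Fin 4) (Fin 4) (ZMod 2) :=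
  Matrix.single i j 1 + Matrix.single j i 1

private abbrev M4' := Matrix (Fin 4) (Fin 4) (ZMod 2)

private lemma mem_span3 {V : Type*} [AddCommGroup V] [Module (ZMod 2) V] (a b c x : V) :
    x ∈ Submodule.span (ZMod 2) ({a, b, c} : Set V) ↔
      x = 0 ∨ x = a ∨ x = b ∨ x = c ∨ x = a + b ∨ x = a + c ∨ x = b + c ∨ x = a + b + c := by
  constructor
  · intro hx
    rw [Submodule.mem_span_insert] at hx
    obtain ⟨r, z, hz, rfl⟩ := hx
    rw [Submodule.mem_span_pair] at hz
    obtain ⟨s, t, rfl⟩ := hz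
    have h2 : ∀ u : ZMod 2, u = 0 ∨ u = 1 := by decide
    rcases h2 r with rfl | rfl <;> rcases h2 s with rfl | rfl <;> rcases h2 t with rfl | rfl <;>
      simp [← add_assoc]
  · have ha : a ∈ Submodule.span (ZMod 2) ({a, b, c} : Set V) :=
      Submodule.subset_span (by simp)
    have hb : b ∈ Submodule.span (ZMod 2) ({a, b, c} : Set V) :=
      Submodule.subset_span (by simp)
    have hc : c ∈ Submodule.span (ZMod 2) ({a, b, c} : Set V) :=
      Submodule.subset_span (by simp)
    rintro (rfl | rfl | rfl | rfl | rfl | rfl | rfl | rfl)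
    · exact Submodule.zero_mem _
    · exact ha
    · exact hb
    · exact hc
    · exact add_mem ha hb
    · exact add_mem ha hc
    · exact add_mem hb hc
    · exact add_mem (add_mem ha hb) hc

private lemma rank_D2 : (Matrix.diagonal ![1, 1, 0, 0] : M4').rank = 2 := by
  rw [Matrix.rank_diagonal]
  decide

private lemma rank_eq_two_of (M : M4') (C : Matrix (Fin 4) (Fin 2) (ZMod 2))
    (R : Matrix (Fin 2) (Fin 4) (ZMod 2)) (P Q : M4')
    (h1 : M = C * R) (h2 : P * M * Q = Matrix.diagonal ![1, 1, 0, 0]) : M.rank = 2 := by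
  refine le_antisymm ?_ ?_
  · calc M.rank = (C * R).rank := by rw [h1]
      _ ≤ C.rank := Matrix.rank_mul_le_left C R
      _ ≤ Fintype.card (Fin 2) := Matrix.rank_le_card_width C
      _ = 2 := by simp
  · calc 2 = (Matrix.diagonal ![1, 1, 0, 0] : M4').rank := rank_D2.symm
      _ = (P * M * Q).rank := by rw [h2]
      _ ≤ (P * M).rank := Matrix.rank_mul_le_left _ _
      _ ≤ M.rank := Matrix.rank_mul_le_right _ _

private lemma rank_eq_four_of (M : M4') (h : M.det = 1) : M.rank = 4 := by
  have hu : IsUnit M := (Matrix.isUnit_iff_isUnit_det M).mpr (by rw [h]; exact isUnit_one)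
  rw [Matrix.rank_of_isUnit M hu, Fintype.card_fin]

private def b1 : M4' := E4 0 3
private def b2 : M4' := E4 1 2
private def b3 : M4' := E4 0 2 + E4 1 3
private def c1 : M4' := E4 0 1

private lemma rank_b1 : b1.rank = 2 :=
  rank_eq_two_of _ !![0, 1; 0, 0; 0, 0; 1, 0] !![1, 0, 0, 0; 0, 0, 0, 1]
    !![0, 0, 0, 1; 1, 0, 0, 0; 0, 0, 0, 0; 0, 0, 0, 0]
    !![1, 0, 0, 0; 0, 0, 0, 0; 0, 0, 0, 0; 0, 1, 0, 0] (by decide) (by decide)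

private lemma rank_b2 : b2.rank = 2 :=
  rank_eq_two_of _ !![0, 0; 0, 1; 1, 0; 0, 0] !![0, 1, 0, 0; 0, 0, 1, 0]
    !![0, 0, 1, 0; 0, 1, 0, 0; 0, 0, 0, 0; 0, 0, 0, 0]
    !![0, 0, 0, 0; 1, 0, 0, 0; 0, 1, 0, 0; 0, 0, 0, 0] (by decide) (by decide)

private lemma rank_b123 : (b1 + b2 + b3).rank = 2 :=
  rank_eq_two_of _ !![0, 1; 0, 1; 1, 0; 1, 0] !![1, 1, 0, 0; 0, 0, 1, 1]
    !![0, 0, 1, 0; 1, 0, 0, 0; 0, 0, 0, 0; 0, 0, 0, 0]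
    !![1, 0, 0, 0; 0, 0, 0, 0; 0, 1, 0, 0; 0, 0, 0, 0] (by decide) (by decide)

private lemma rank_c1 : c1.rank = 2 :=
  rank_eq_two_of _ !![0, 1; 1, 0; 0, 0; 0, 0] !![1, 0, 0, 0; 0, 1, 0, 0]
    !![0, 1, 0, 0; 1, 0, 0, 0; 0, 0, 0, 0; 0, 0, 0, 0]
    !![1, 0, 0, 0; 0, 1, 0, 0; 0, 0, 0, 0; 0, 0, 0, 0] (by decide) (by decide)

private lemma rank_c1b2 : (c1 + b2).rank = 2 :=
  rank_eq_two_of _ !![0, 1; 1, 0; 0, 1; 0, 0] !![1, 0, 1, 0; 0, 1, 0, 0]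
    !![0, 1, 0, 0; 1, 0, 0, 0; 0, 0, 0, 0; 0, 0, 0, 0]
    !![1, 0, 0, 0; 0, 1, 0, 0; 0, 0, 0, 0; 0, 0, 0, 0] (by decide) (by decide)

private lemma rank_b3 : b3.rank = 4 := rank_eq_four_of _ (by decide)
private lemma rank_b13 : (b1 + b3).rank = 4 := rank_eq_four_of _ (by decide)
private lemma rank_b23 : (b2 + b3).rank = 4 := rank_eq_four_of _ (by decide)
private lemma rank_b12 : (b1 + b2).rank = 4 := rank_eq_four_of _ (by decide)
private lemma rank_c13 : (c1 + b3).rank = 4 := rank_eq_four_of _ (by decide)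
private lemma rank_c123 : (c1 + b2 + b3).rank = 4 := rank_eq_four_of _ (by decide)

/-- The subspaces `𝔅 = ⟨E₁₄, E₂₃, E₁₃+E₂₄⟩` and
`𝔆 = ⟨E₁₂, E₂₃, E₁₃+E₂₄⟩` of `Λ₄` have the same rank multisets on nonzero
elements (three of rank 2 and four of rank 4 each), yet are not congruent. -/
theorem stmt12 :
    let 𝔅 : Submodule (ZMod 2) (Matrix (Fin 4) (Fin 4) (ZMod 2)) :=
      Submodule.span (ZMod 2) {E4 0 3, E4 1 2, E4 0 2 + E4 1 3}
    let 𝔆 : Submodule (ZMod 2) (Matrix (Fin 4) (Fin 4) (ZMod 2)) :=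
      Submodule.span (ZMod 2) {E4 0 1, E4 1 2, E4 0 2 + E4 1 3}
    ({B : Matrix (Fin 4) (Fin 4) (ZMod 2) | B ∈ 𝔅 ∧ B ≠ 0 ∧ B.rank = 2}.ncard = 3 ∧
     {C : Matrix (Fin 4) (Fin 4) (ZMod 2) | C ∈ 𝔆 ∧ C ≠ 0 ∧ C.rank = 2}.ncard = 3 ∧
     {B : Matrix (Fin 4) (Fin 4) (ZMod 2) | B ∈ 𝔅 ∧ B ≠ 0 ∧ B.rank = 4}.ncard = 4 ∧
     {C : Matrix (Fin 4) (Fin 4) (ZMod 2) | C ∈ 𝔆 ∧ C ≠ 0 ∧ C.rank = 4}.ncard = 4) ∧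
    ¬ ∃ A : Matrix (Fin 4) (Fin 4) (ZMod 2), IsUnit A ∧
        (fun B => A * B * Aᵀ) '' (𝔅 : Set (Matrix (Fin 4) (Fin 4) (ZMod 2)))
          = (𝔆 : Set (Matrix (Fin 4) (Fin 4) (ZMod 2))) := by
  intro 𝔅 𝔆
  have hB : ∀ x : M4', x ∈ 𝔅 ↔
      x = 0 ∨ x = b1 ∨ x = b2 ∨ x = b3 ∨ x = b1 + b2 ∨ x = b1 + b3 ∨ x = b2 + b3 ∨
        x = b1 + b2 + b3 :=
    fun x => mem_span3 b1 b2 b3 x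
  have hG : ∀ x : M4', x ∈ 𝔆 ↔
      x = 0 ∨ x = c1 ∨ x = b2 ∨ x = b3 ∨ x = c1 + b2 ∨ x = c1 + b3 ∨ x = b2 + b3 ∨
        x = c1 + b2 + b3 :=
    fun x => mem_span3 c1 b2 b3 x
  constructor
  · refine ⟨?_, ?_, ?_, ?_⟩
    · have hset : {B : M4' | B ∈ 𝔅 ∧ B ≠ 0 ∧ B.rank = 2} =
          (↑({b1, b2, b1 + b2 + b3} : Finset M4') : Set M4') := by
        ext x
        simp only [Set.mem_setOf_eq, Finset.coe_insert, Finset.coe_singleton,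
          Set.mem_insert_iff, Set.mem_singleton_iff]
        constructor
        · rintro ⟨hm, hne, hrk⟩
          rcases (hB x).mp hm with rfl | rfl | rfl | rfl | rfl | rfl | rfl | rfl
          · exact absurd rfl hne
          · tauto
          · tauto
          · rw [rank_b3] at hrk; omega
          · rw [rank_b12] at hrk; omega
          · rw [rank_b13] at hrk; omega
          · rw [rank_b23] at hrk; omega
          · tauto
        · rintro (rfl | rfl | rfl)
          · exact ⟨(hB _).mpr (by tauto), by decide, rank_b1⟩
          · exact ⟨(hB _).mpr (by tauto), by decide, rank_b2⟩
          · exact ⟨(hB _).mpr (by tauto), by decide, rank_b123⟩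
      rw [hset, Set.ncard_coe_finset]
      decide
    · have hset : {C : M4' | C ∈ 𝔆 ∧ C ≠ 0 ∧ C.rank = 2} =
          (↑({c1, b2, c1 + b2} : Finset M4') : Set M4') := by
        ext x
        simp only [Set.mem_setOf_eq, Finset.coe_insert, Finset.coe_singleton,
          Set.mem_insert_iff, Set.mem_singleton_iff]
        constructor
        · rintro ⟨hm, hne, hrk⟩
          rcases (hG x).mp hm with rfl | rfl | rfl | rfl | rfl | rfl | rfl | rfl
          · exact absurd rfl hne
          · tauto
          · tauto
          · rw [rank_b3] at hrk; omega
          · tauto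
          · rw [rank_c13] at hrk; omega
          · rw [rank_b23] at hrk; omega
          · rw [rank_c123] at hrk; omega
        · rintro (rfl | rfl | rfl)
          · exact ⟨(hG _).mpr (by tauto), by decide, rank_c1⟩
          · exact ⟨(hG _).mpr (by tauto), by decide, rank_b2⟩
          · exact ⟨(hG _).mpr (by tauto), by decide, rank_c1b2⟩
      rw [hset, Set.ncard_coe_finset]
      decide
    · have hset : {B : M4' | B ∈ 𝔅 ∧ B ≠ 0 ∧ B.rank = 4} =
          (↑({b3, b1 + b2, b1 + b3, b2 + b3} : Finset M4') : Set M4') := by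
        ext x
        simp only [Set.mem_setOf_eq, Finset.coe_insert, Finset.coe_singleton,
          Set.mem_insert_iff, Set.mem_singleton_iff]
        constructor
        · rintro ⟨hm, hne, hrk⟩
          rcases (hB x).mp hm with rfl | rfl | rfl | rfl | rfl | rfl | rfl | rfl
          · exact absurd rfl hne
          · rw [rank_b1] at hrk; omega
          · rw [rank_b2] at hrk; omega
          · tauto
          · tauto
          · tauto
          · tauto
          · rw [rank_b123] at hrk; omega
        · rintro (rfl | rfl | rfl | rfl)
          · exact ⟨(hB _).mpr (by tauto), by decide, rank_b3⟩
          · exact ⟨(hB _).mpr (by tauto), by decide, rank_b12⟩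
          · exact ⟨(hB _).mpr (by tauto), by decide, rank_b13⟩
          · exact ⟨(hB _).mpr (by tauto), by decide, rank_b23⟩
      rw [hset, Set.ncard_coe_finset]
      decide
    · have hset : {C : M4' | C ∈ 𝔆 ∧ C ≠ 0 ∧ C.rank = 4} =
          (↑({b3, c1 + b3, b2 + b3, c1 + b2 + b3} : Finset M4') : Set M4') := by
        ext x
        simp only [Set.mem_setOf_eq, Finset.coe_insert, Finset.coe_singleton,
          Set.mem_insert_iff, Set.mem_singleton_iff]
        constructor
        · rintro ⟨hm, hne, hrk⟩
          rcases (hG x).mp hm with rfl | rfl | rfl | rfl | rfl | rfl | rfl | rfl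
          · exact absurd rfl hne
          · rw [rank_c1] at hrk; omega
          · rw [rank_b2] at hrk; omega
          · tauto
          · rw [rank_c1b2] at hrk; omega
          · tauto
          · tauto
          · tauto
        · rintro (rfl | rfl | rfl | rfl)
          · exact ⟨(hG _).mpr (by tauto), by decide, rank_b3⟩
          · exact ⟨(hG _).mpr (by tauto), by decide, rank_c13⟩
          · exact ⟨(hG _).mpr (by tauto), by decide, rank_b23⟩
          · exact ⟨(hG _).mpr (by tauto), by decide, rank_c123⟩
      rw [hset, Set.ncard_coe_finset]
      decide
  · rintro ⟨A, hA, himg⟩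
    have hdA : IsUnit A.det := (Matrix.isUnit_iff_isUnit_det A).mp hA
    have hdAT : IsUnit Aᵀ.det := by rwa [Matrix.det_transpose]
    have hrk : ∀ B : M4', (A * B * Aᵀ).rank = B.rank := fun B => by
      rw [Matrix.rank_mul_eq_left_of_isUnit_det Aᵀ (A * B) hdAT,
        Matrix.rank_mul_eq_right_of_isUnit_det A B hdA]
    have himg' : ∀ B ∈ (𝔅 : Set M4'), A * B * Aᵀ ∈ (𝔆 : Set M4') := by
      intro B hBmem
      rw [← himg]
      exact ⟨B, hBmem, rfl⟩
    -- image of b1 is a rank-2 element of 𝔆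
    have key : ∀ B : M4', B ∈ (𝔅 : Set M4') → B.rank = 2 →
        A * B * Aᵀ = c1 ∨ A * B * Aᵀ = b2 ∨ A * B * Aᵀ = c1 + b2 := by
      intro B hBmem hB2
      have hmem := himg' B hBmem
      have hr2 : (A * B * Aᵀ).rank = 2 := by rw [hrk B, hB2]
      rcases (hG _).mp hmem with h | h | h | h | h | h | h | h
      · rw [h, Matrix.rank_zero] at hr2; omega
      · tauto
      · tauto
      · rw [h, rank_b3] at hr2; omega
      · tauto
      · rw [h, rank_c13] at hr2; omega
      · rw [h, rank_b23] at hr2; omega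
      · rw [h, rank_c123] at hr2; omega
    have h1 := key b1 ((hB _).mpr (by tauto)) rank_b1
    have h2 := key b2 ((hB _).mpr (by tauto)) rank_b2
    have h4 : (A * b1 * Aᵀ + A * b2 * Aᵀ).rank = 4 := by
      have : A * b1 * Aᵀ + A * b2 * Aᵀ = A * (b1 + b2) * Aᵀ := by
        rw [mul_add, add_mul]
      rw [this, hrk, rank_b12]
    rcases h1 with h1 | h1 | h1 <;> rcases h2 with h2 | h2 | h2 <;> rw [h1, h2] at h4
    · rw [show c1 + c1 = (0 : M4') from by decide, Matrix.rank_zero] at h4; omega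
    · rw [rank_c1b2] at h4; omega
    · rw [show c1 + (c1 + b2) = b2 from by decide, rank_b2] at h4; omega
    · rw [show b2 + c1 = c1 + b2 from by decide, rank_c1b2] at h4; omega
    · rw [show b2 + b2 = (0 : M4') from by decide, Matrix.rank_zero] at h4; omega
    · rw [show b2 + (c1 + b2) = c1 from by decide, rank_c1] at h4; omega
    · rw [show c1 + b2 + c1 = b2 from by decide, rank_b2] at h4; omega
    · rw [show c1 + b2 + b2 = c1 from by decide, rank_c1] at h4; omega
    · rw [show c1 + b2 + (c1 + b2) = (0 : M4') from by decide, Matrix.rank_zero] at h4; omega
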